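/- arXiv:1606.01724 — 2 statements merged into one kernel-verified Lean document; each statement's English description precedes it below -/
import Mathlib

section
/- Let a > 0 and let R_1(a) = sup{R > 0 : g(·;a) > 0 on (0,R)}. Then J(r;a) → 0 as r → 0+, and for every r ∈ (0,R_1(a)) the derivative of J(·;a) satisfies J'(r;a) = G(r) · g(r;a)², where G(r) = (p/(3p-2)³) · ρ(r)^{2p/(3p-2)} · P(1/r). Consequently, with r_G the unique positive number such that P(1/r) > 0 on (0,r_G) and P(1/r) < 0 on (r_G,∞), the function J(·;a) is increasing on (0, min{r_G, R_1(a)}), and if R_1(a) > r_G it is decreasing on (r_G, R_1(a)). -/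
open Real Set Filter MeasureTheory

/-- `f` is a solution of the profile equation with parameter `a`:
`f` is C¹ on `[0,∞)` with derivative `f'`, the map `r ↦ |f'(r)|^{p-2} f'(r)` is C¹ on `[0,∞)`
with derivative `F'`, the ODE
`(|f'|^{p-2}f')'(r) + ((N-1)/r)(|f'|^{p-2}f')(r) + f(r) - |f'(r)|^{p-1} = 0` holds for `r > 0`,
and `f 0 = a`, `f' 0 = 0`. -/
def IsProfileSol (N : ℕ) (p a : ℝ) (f f' F' : ℝ → ℝ) : Prop :=
  (∀ r ∈ Ici (0:ℝ), HasDerivWithinAt f (f' r) (Ici 0) r) ∧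
  ContinuousOn f' (Ici 0) ∧
  (∀ r ∈ Ici (0:ℝ), HasDerivWithinAt (fun s => |f' s| ^ (p - 2) * f' s) (F' r) (Ici 0) r) ∧
  ContinuousOn F' (Ici 0) ∧
  (∀ r, 0 < r →
    F' r + (((N : ℝ) - 1) / r) * (|f' r| ^ (p - 2) * f' r) + f r - |f' r| ^ (p - 1) = 0) ∧
  f 0 = a ∧ f' 0 = 0

/-- `g(r;a) = -|f'(r;a)|^{p-2} f'(r;a)`. -/
noncomputable def gFun (p : ℝ) (f' : ℝ → ℝ) (r : ℝ) : ℝ := -(|f' r| ^ (p - 2) * f' r)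

/-- `ρ(r) = r^{N-1} e^r`. -/
noncomputable def rho (N : ℕ) (r : ℝ) : ℝ := r ^ (N - 1) * Real.exp r

/-- the derivative of `ρ`. -/
noncomputable def rho' (N : ℕ) (r : ℝ) : ℝ :=
  (((N : ℝ) - 1) * r ^ (N - 2) + r ^ (N - 1)) * Real.exp r

/-- `w(r;a) = ρ(r) g(r;a)`. -/
noncomputable def wFun (N : ℕ) (p : ℝ) (f' : ℝ → ℝ) (r : ℝ) : ℝ := rho N r * gFun p f' r

/-- the derivative `w'(r;a) = ρ'(r) g(r;a) + ρ(r) g'(r;a)`, where `g' = -F'`. -/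
noncomputable def wDeriv (N : ℕ) (p : ℝ) (f' F' : ℝ → ℝ) (r : ℝ) : ℝ :=
  rho' N r * gFun p f' r - rho N r * F' r

/-- `α(r) = ρ(r)^{2p/(3p-2)}`. -/
noncomputable def alphaFun (N : ℕ) (p r : ℝ) : ℝ := rho N r ^ (2 * p / (3 * p - 2))

/-- `β(r) = (2(p-1)/(3p-2))(1 + (N-1)/r) α(r)`. -/
noncomputable def betaFun (N : ℕ) (p r : ℝ) : ℝ :=
  (2 * (p - 1) / (3 * p - 2)) * (1 + ((N : ℝ) - 1) / r) * alphaFun N p r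

/-- `γ(r)`. -/
noncomputable def gammaFun (N : ℕ) (p r : ℝ) : ℝ :=
  -(2 * (p - 1) * (2 - p) / (3 * p - 2) ^ 2
      + (4 * ((N : ℝ) - 1) * (p - 1) * (2 - p) / (3 * p - 2) ^ 2) * (1 / r)
      + (((N : ℝ) - 1) / (3 * p - 2) ^ 2)
          * (p * (3 * p - 2) + 2 * ((N : ℝ) - 1) * (p - 1) * (2 - p)) * (1 / r ^ 2))
    * alphaFun N p r

/-- The Pohozaev functional
`J(r;a) = (1/2)α g'² + β g g' + (1/2)γ g² + ((p-1)/p) δ g^{p/(p-1)}`, with `δ = α`, `g' = -F'`. -/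
noncomputable def Jfun (N : ℕ) (p : ℝ) (f' F' : ℝ → ℝ) (r : ℝ) : ℝ :=
  (1 / 2) * alphaFun N p r * (-(F' r)) ^ 2 + betaFun N p r * gFun p f' r * (-(F' r))
    + (1 / 2) * gammaFun N p r * gFun p f' r ^ 2
    + ((p - 1) / p) * alphaFun N p r * gFun p f' r ^ (p / (p - 1))

def M3 (N : ℕ) (p : ℝ) : ℝ :=
  (3 * p - 2) ^ 2 + ((N : ℝ) - 1) * (3 * p - 2) * (3 * p - 4)
    - 2 * (p - 1) * (2 - p) * ((N : ℝ) - 1) ^ 2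

def M2 (N : ℕ) (p : ℝ) : ℝ := (3 * p - 2) * (3 * p - 4) - 6 * ((N : ℝ) - 1) * (p - 1) * (2 - p)

def M1 (p : ℝ) : ℝ := -(6 * (p - 1) * (2 - p))

def M0 (p : ℝ) : ℝ := -(2 * (p - 1) * (2 - p))

/-- The cubic polynomial `P(z) = M₃(N-1)z³ + M₂(N-1)z² + M₁(N-1)z + M₀`. -/
def Pcub (N : ℕ) (p z : ℝ) : ℝ :=
  M3 N p * ((N : ℝ) - 1) * z ^ 3 + M2 N p * ((N : ℝ) - 1) * z ^ 2
    + M1 p * ((N : ℝ) - 1) * z + M0 p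

/-- `G(r) = (p/(3p-2)³) ρ(r)^{2p/(3p-2)} P(1/r)`. -/
noncomputable def Gfun (N : ℕ) (p r : ℝ) : ℝ :=
  (p / (3 * p - 2) ^ 3) * rho N r ^ (2 * p / (3 * p - 2)) * Pcub N p (1 / r)

lemma rho_pos (N : ℕ) {r : ℝ} (hr : 0 < r) : 0 < rho N r :=
  mul_pos (pow_pos hr _) (Real.exp_pos r)

lemma rho_hasDerivAt (N : ℕ) (hN : 2 ≤ N) (r : ℝ) : HasDerivAt (rho N) (rho' N r) r := by
  have h := (hasDerivAt_pow (N - 1) r).mul (Real.hasDerivAt_exp r)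
  have h1 : N - 1 - 1 = N - 2 := by omega
  have h2 : ((N - 1 : ℕ) : ℝ) = (N : ℝ) - 1 := by
    have : 1 ≤ N := by omega
    push_cast [Nat.cast_sub this]; ring
  rw [h1, h2] at h
  have h' : HasDerivAt (rho N) _ r := h
  convert h' using 1
  unfold rho'
  ring

lemma rho'_eq (N : ℕ) (hN : 2 ≤ N) {r : ℝ} (hr : 0 < r) :
    rho' N r = (1 + ((N : ℝ) - 1) / r) * rho N r := by
  unfold rho rho'
  have h : N - 1 = (N - 2) + 1 := by omega
  rw [h, pow_succ]
  field_simp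
  ring

lemma alpha_hasDerivAt (N : ℕ) (hN : 2 ≤ N) {p : ℝ} (hp3 : 3 * p - 2 ≠ 0) {r : ℝ} (hr : 0 < r) :
    HasDerivAt (alphaFun N p)
      ((2 * p / (3 * p - 2)) * (1 + ((N : ℝ) - 1) / r) * alphaFun N p r) r := by
  have hρ := rho_hasDerivAt N hN r
  have hρpos := rho_pos N hr
  have h : HasDerivAt (alphaFun N p)
      (rho' N r * (2 * p / (3 * p - 2)) * rho N r ^ (2 * p / (3 * p - 2) - 1)) r :=
    hρ.rpow_const (p := 2 * p / (3 * p - 2)) (Or.inl hρpos.ne')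
  convert h using 1
  rw [Real.rpow_sub hρpos, Real.rpow_one, rho'_eq N hN hr]
  unfold alphaFun
  field_simp

lemma inv_hasDerivAt {r : ℝ} (hr : 0 < r) :
    HasDerivAt (fun s : ℝ => 1 / s) (-(1 / r ^ 2)) r := by
  simpa [one_div] using hasDerivAt_inv hr.ne'

lemma inv_sq_hasDerivAt {r : ℝ} (hr : 0 < r) :
    HasDerivAt (fun s : ℝ => 1 / s ^ 2) (-(2 / r ^ 3)) r := by
  have h := (hasDerivAt_pow 2 r).inv (pow_ne_zero 2 hr.ne')
  have h2 : HasDerivAt (fun s : ℝ => 1 / s ^ 2) (-(↑2 * r ^ (2 - 1)) / (r ^ 2) ^ 2) r := by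
    have h' : HasDerivAt (fun s : ℝ => (s ^ 2)⁻¹) _ r := h
    simpa [one_div] using h'
  convert h2 using 1
  field_simp
  ring

lemma cfun_hasDerivAt (n : ℝ) {r : ℝ} (hr : 0 < r) :
    HasDerivAt (fun s : ℝ => 1 + n / s) (-(n / r ^ 2)) r := by
  have h := ((hasDerivAt_inv hr.ne').const_mul n).const_add 1
  have h2 : HasDerivAt (fun s : ℝ => 1 + n / s) (n * -(r ^ 2)⁻¹) r := by
    simpa [div_eq_mul_inv] using h
  convert h2 using 1
  field_simp

lemma beta_hasDerivAt (N : ℕ) (hN : 2 ≤ N) {p : ℝ} (hp3 : 3 * p - 2 ≠ 0) {r : ℝ} (hr : 0 < r) :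
    HasDerivAt (betaFun N p)
      ((2 * (p - 1) / (3 * p - 2)) *
        ((2 * p / (3 * p - 2)) * (1 + ((N : ℝ) - 1) / r) ^ 2 - ((N : ℝ) - 1) / r ^ 2)
        * alphaFun N p r) r := by
  have h := ((cfun_hasDerivAt ((N : ℝ) - 1) hr).const_mul (2 * (p - 1) / (3 * p - 2))).mul
    (alpha_hasDerivAt N hN hp3 hr)
  have h2 : HasDerivAt (betaFun N p)
      (2 * (p - 1) / (3 * p - 2) * -(((N : ℝ) - 1) / r ^ 2) * alphaFun N p r
        + 2 * (p - 1) / (3 * p - 2) * (1 + ((N : ℝ) - 1) / r)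
          * (2 * p / (3 * p - 2) * (1 + ((N : ℝ) - 1) / r) * alphaFun N p r)) r := h
  convert h2 using 1
  ring

lemma gamma_hasDerivAt (N : ℕ) (hN : 2 ≤ N) {p : ℝ} (hp3 : 3 * p - 2 ≠ 0) {r : ℝ} (hr : 0 < r) :
    HasDerivAt (gammaFun N p)
      (-(((4 * ((N : ℝ) - 1) * (p - 1) * (2 - p) / (3 * p - 2) ^ 2) * -(1 / r ^ 2)
          + (((N : ℝ) - 1) / (3 * p - 2) ^ 2)
              * (p * (3 * p - 2) + 2 * ((N : ℝ) - 1) * (p - 1) * (2 - p)) * -(2 / r ^ 3))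
            * alphaFun N p r
        + (2 * (p - 1) * (2 - p) / (3 * p - 2) ^ 2
            + (4 * ((N : ℝ) - 1) * (p - 1) * (2 - p) / (3 * p - 2) ^ 2) * (1 / r)
            + (((N : ℝ) - 1) / (3 * p - 2) ^ 2)
                * (p * (3 * p - 2) + 2 * ((N : ℝ) - 1) * (p - 1) * (2 - p)) * (1 / r ^ 2))
          * (2 * p / (3 * p - 2) * (1 + ((N : ℝ) - 1) / r) * alphaFun N p r))) r := by
  have hE := (((inv_hasDerivAt hr).const_mul
      (4 * ((N : ℝ) - 1) * (p - 1) * (2 - p) / (3 * p - 2) ^ 2)).const_add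
      (2 * (p - 1) * (2 - p) / (3 * p - 2) ^ 2)).add
    ((inv_sq_hasDerivAt hr).const_mul
      ((((N : ℝ) - 1) / (3 * p - 2) ^ 2)
        * (p * (3 * p - 2) + 2 * ((N : ℝ) - 1) * (p - 1) * (2 - p))))
  have h := (hE.neg).mul (alpha_hasDerivAt N hN hp3 hr)
  have h' : HasDerivAt (gammaFun N p) _ r := h
  convert h' using 1
  simp only [Pi.add_apply, Pi.neg_apply, Pi.mul_apply]
  ring

lemma const_div_hasDerivAt (n : ℝ) {r : ℝ} (hr : 0 < r) :
    HasDerivAt (fun s : ℝ => n / s) (-(n / r ^ 2)) r := by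
  have h := (hasDerivAt_inv hr.ne').const_mul n
  have h2 : HasDerivAt (fun s : ℝ => n / s) (n * -(r ^ 2)⁻¹) r := by
    simpa [div_eq_mul_inv] using h
  convert h2 using 1
  field_simp

lemma abs_helper {p : ℝ} (hp1 : 1 < p) (x : ℝ) :
    |(|x| ^ (p - 2) * x)| = |x| ^ (p - 1) := by
  rcases eq_or_ne x 0 with h | h
  · simp [h, Real.zero_rpow (by linarith : p - 1 ≠ 0)]
  · have hx : (0 : ℝ) < |x| := abs_pos.mpr h
    rw [abs_mul, abs_of_nonneg (Real.rpow_nonneg (abs_nonneg x) _)]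
    rw [← Real.rpow_add_one hx.ne']
    ring_nf

set_option maxHeartbeats 2000000 in
lemma J_hasDerivAt (N : ℕ) (hN : 2 ≤ N) {p : ℝ} (hp1 : 1 < p) (hp2 : p < 2)
    (a : ℝ) (f f' F' : ℝ → ℝ) (hf : IsProfileSol N p a f f' F')
    {r : ℝ} (hr : 0 < r) (hgp : ∀ s, 0 < s → s ≤ r → 0 < gFun p f' s) :
    HasDerivAt (Jfun N p f' F') (Gfun N p r * gFun p f' r ^ 2) r := by
  obtain ⟨hfd, hf'c, hGd, hF'c, hODE, hf0, hf'0⟩ := hf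
  have hp3 : 3 * p - 2 ≠ 0 := by nlinarith
  have hpm1 : p - 1 ≠ 0 := by linarith
  have hp0 : p ≠ 0 := by nlinarith
  have hu : 0 < gFun p f' r := hgp r hr le_rfl
  -- derivative of g
  have hg : ∀ s, 0 < s → HasDerivAt (gFun p f') (-(F' s)) s := fun s hs =>
    ((hGd s hs.le).hasDerivAt (Ici_mem_nhds hs)).neg
  -- |g s| = |f' s| ^ (p-1)
  have hgabs : ∀ s, |gFun p f' s| = |f' s| ^ (p - 1) := fun s => by
    rw [gFun, abs_neg]; exact abs_helper hp1 (f' s)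
  -- expression for F' where g > 0
  have hgeq : ∀ s, 0 < s → 0 < gFun p f' s →
      F' s = (((N : ℝ) - 1) / s) * gFun p f' s + gFun p f' s - f s := by
    intro s hs hgs
    have hode := hODE s hs
    have h2 : |f' s| ^ (p - 1) = gFun p f' s := by
      rw [← hgabs s, abs_of_pos hgs]
    have h3 : |f' s| ^ (p - 2) * f' s = -gFun p f' s := by
      rw [gFun]; ring
    rw [h3, h2] at hode
    have : (((N : ℝ) - 1) / s) * -gFun p f' s = -((((N : ℝ) - 1) / s) * gFun p f' s) := by ring
    rw [this] at hode
    linarith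
  -- eventual equality near r
  have hev : F' =ᶠ[nhds r]
      fun s => (((N : ℝ) - 1) / s) * gFun p f' s + gFun p f' s - f s := by
    have h1 : ∀ᶠ s in nhds r, 0 < gFun p f' s :=
      (hg r hr).continuousAt.eventually (eventually_gt_nhds hu)
    have h0 : ∀ᶠ s in nhds r, 0 < s := eventually_gt_nhds hr
    filter_upwards [h1, h0] with s hs1 hs0
    exact hgeq s hs0 hs1
  -- derivative of F'
  have hfd' : HasDerivAt f (f' r) r := (hfd r hr.le).hasDerivAt (Ici_mem_nhds hr)
  have hF'd : HasDerivAt F'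
      ((-((((N : ℝ) - 1)) / r ^ 2) * gFun p f' r
          + (((N : ℝ) - 1) / r) * -(F' r) + -(F' r)) - f' r) r := by
    have hφ := (((const_div_hasDerivAt ((N : ℝ) - 1) hr).mul (hg r hr)).add (hg r hr)).sub hfd'
    exact hφ.congr_of_eventuallyEq hev
  -- f' r in terms of g
  have hgu : gFun p f' r = |f' r| ^ (p - 1) := by rw [← hgabs r, abs_of_pos hu]
  have hf'neg : f' r < 0 := by
    rcases lt_trichotomy (f' r) 0 with h | h | h
    · exact h
    · exfalso; rw [gFun, h] at hu; simp at hu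
    · exfalso
      have : 0 ≤ |f' r| ^ (p - 2) * f' r :=
        mul_nonneg (Real.rpow_nonneg (abs_nonneg _) _) h.le
      rw [gFun] at hu; linarith
  have habs' : |f' r| = gFun p f' r ^ (1 / (p - 1)) := by
    rw [hgu, ← Real.rpow_mul (abs_nonneg _), mul_one_div, div_self hpm1, Real.rpow_one]
  have hf'r : f' r = -(gFun p f' r ^ (1 / (p - 1))) := by
    rw [← habs', abs_of_neg hf'neg, neg_neg]
  -- derivative of g ^ (p/(p-1))
  have hsplit : p / (p - 1) - 1 = 1 / (p - 1) := by field_simp; ring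
  have hrpow : HasDerivAt (fun s => gFun p f' s ^ (p / (p - 1)))
      (-F' r * (p / (p - 1)) * gFun p f' r ^ (1 / (p - 1))) r := by
    have h := (hg r hr).rpow_const (p := p / (p - 1)) (Or.inl hu.ne')
    rwa [hsplit] at h
  have hU : gFun p f' r ^ (p / (p - 1)) = gFun p f' r * gFun p f' r ^ (1 / (p - 1)) := by
    have h1 : p / (p - 1) = 1 + 1 / (p - 1) := by field_simp; ring
    rw [h1, Real.rpow_add hu, Real.rpow_one]
  -- assemble derivative of J
  have hαd := alpha_hasDerivAt N hN hp3 hr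
  have hβd := beta_hasDerivAt N hN hp3 hr
  have hγd := gamma_hasDerivAt N hN hp3 hr
  have h1 := (hαd.const_mul (1 / 2 : ℝ)).mul ((hF'd.neg).pow 2)
  have h2 := (hβd.mul (hg r hr)).mul hF'd.neg
  have h3 := (hγd.const_mul (1 / 2 : ℝ)).mul ((hg r hr).pow 2)
  have h4 := (hαd.const_mul ((p - 1) / p)).mul hrpow
  have hJ := ((h1.add h2).add h3).add h4
  have hJ' : HasDerivAt (Jfun N p f' F') _ r := hJ
  convert hJ' using 1
  simp only [Pi.add_apply, Pi.neg_apply, Pi.mul_apply, Pi.pow_apply]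
  rw [hf'r, hU]
  unfold Gfun Pcub M3 M2 M1 M0 betaFun gammaFun alphaFun
  have hρ := (rho_pos N hr).ne'
  have hp3' : p * 3 - 2 ≠ 0 := by contrapose! hp3; linarith
  simp only [Nat.cast_ofNat, Nat.add_one_sub_one, pow_one]
  field_simp
  ring

set_option maxHeartbeats 1000000 in
lemma J_tendsto (N : ℕ) (hN : 2 ≤ N) {p : ℝ} (hp1 : 1 < p) (hp2 : p < 2)
    (a : ℝ) (f f' F' : ℝ → ℝ) (hf : IsProfileSol N p a f f' F') :
    Tendsto (Jfun N p f' F') (nhdsWithin 0 (Ioi 0)) (nhds 0) := by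
  obtain ⟨hfd, hf'c, hGd, hF'c, hODE, hf0, hf'0⟩ := hf
  have hp3 : (0:ℝ) < 3 * p - 2 := by linarith
  have hpm1 : p - 1 ≠ 0 := by linarith
  have hq0 : 0 < 2 * p / (3 * p - 2) := by positivity
  have hg0 : gFun p f' 0 = 0 := by simp [gFun, hf'0]
  -- g tends to 0
  have hgc : Tendsto (gFun p f') (nhdsWithin 0 (Ioi 0)) (nhds 0) := by
    have h := ((hGd 0 self_mem_Ici).continuousWithinAt).neg
    have h2 : Tendsto (gFun p f') (nhdsWithin 0 (Ici 0)) (nhds (gFun p f' 0)) := h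
    rw [hg0] at h2
    exact h2.mono_left (nhdsWithin_mono 0 Ioi_subset_Ici_self)
  -- g r / r tends to -(F' 0)
  have hslope : Tendsto (fun r => gFun p f' r / r) (nhdsWithin 0 (Ioi 0)) (nhds (-(F' 0))) := by
    have h := hasDerivWithinAt_iff_tendsto_slope.mp (hGd 0 self_mem_Ici)
    rw [Ici_sdiff_left] at h
    have h2 := h.neg
    refine h2.congr fun x => ?_
    rw [slope_def_field]
    simp only [hf'0]
    rw [gFun]
    field_simp
    simp
  -- F' tends to F' 0
  have hF'0 : Tendsto F' (nhdsWithin 0 (Ioi 0)) (nhds (F' 0)) :=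
    (hF'c 0 self_mem_Ici).mono_left (nhdsWithin_mono 0 Ioi_subset_Ici_self)
  -- alpha tends to 0
  have hρ0 : Tendsto (rho N) (nhdsWithin 0 (Ioi 0)) (nhds 0) := by
    have hc : Continuous (rho N) := (continuous_pow _).mul Real.continuous_exp
    have h := (hc.tendsto 0).mono_left (nhdsWithin_le_nhds (s := Ioi 0))
    have hz : rho N 0 = 0 := by
      rw [rho]
      rw [zero_pow (by omega : N - 1 ≠ 0)]
      simp
    rwa [hz] at h
  have hα0 : Tendsto (alphaFun N p) (nhdsWithin 0 (Ioi 0)) (nhds 0) := by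
    have hc : ContinuousAt (fun x : ℝ => x ^ (2 * p / (3 * p - 2))) 0 :=
      Real.continuousAt_rpow_const 0 _ (Or.inr hq0.le)
    have h := hc.tendsto.comp hρ0
    rwa [Real.zero_rpow hq0.ne'] at h
  -- rewrite J in a limit-friendly form
  have hT : ∀ᶠ r in nhdsWithin 0 (Ioi (0:ℝ)), Jfun N p f' F' r =
      1 / 2 * alphaFun N p r * (-(F' r)) ^ 2
      + ((2 * (p - 1) / (3 * p - 2)) * (alphaFun N p r * gFun p f' r)
          + (2 * (p - 1) / (3 * p - 2) * ((N : ℝ) - 1))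
            * (alphaFun N p r * (gFun p f' r / r))) * (-(F' r))
      + (-(1 / 2)) * ((2 * (p - 1) * (2 - p) / (3 * p - 2) ^ 2)
            * (alphaFun N p r * gFun p f' r * gFun p f' r)
          + (4 * ((N : ℝ) - 1) * (p - 1) * (2 - p) / (3 * p - 2) ^ 2)
            * (alphaFun N p r * (gFun p f' r / r) * gFun p f' r)
          + ((((N : ℝ) - 1) / (3 * p - 2) ^ 2)
              * (p * (3 * p - 2) + 2 * ((N : ℝ) - 1) * (p - 1) * (2 - p)))
            * (alphaFun N p r * (gFun p f' r / r) * (gFun p f' r / r)))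
      + ((p - 1) / p) * (alphaFun N p r * gFun p f' r ^ (p / (p - 1))) := by
    filter_upwards [self_mem_nhdsWithin] with r hr
    have hr0 : r ≠ 0 := (ne_of_gt hr)
    unfold Jfun betaFun gammaFun
    field_simp
  refine Tendsto.congr' (Filter.EventuallyEq.symm hT) ?_
  have l1 : Tendsto (fun r => 1 / 2 * alphaFun N p r * (-(F' r)) ^ 2)
      (nhdsWithin 0 (Ioi (0:ℝ))) (nhds 0) := by
    have := (tendsto_const_nhds (x := (1:ℝ)/2)).mul hα0 |>.mul ((hF'0.neg).pow 2)
    simpa using this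
  have l2 : Tendsto (fun r => ((2 * (p - 1) / (3 * p - 2)) * (alphaFun N p r * gFun p f' r)
      + (2 * (p - 1) / (3 * p - 2) * ((N : ℝ) - 1))
        * (alphaFun N p r * (gFun p f' r / r))) * (-(F' r)))
      (nhdsWithin 0 (Ioi (0:ℝ))) (nhds 0) := by
    have := (((tendsto_const_nhds (x := 2 * (p - 1) / (3 * p - 2))).mul (hα0.mul hgc)).add
      ((tendsto_const_nhds (x := 2 * (p - 1) / (3 * p - 2) * ((N : ℝ) - 1))).mul
        (hα0.mul hslope))).mul hF'0.neg
    simpa using this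
  have l3 : Tendsto (fun r => (-(1 / 2 : ℝ)) * ((2 * (p - 1) * (2 - p) / (3 * p - 2) ^ 2)
        * (alphaFun N p r * gFun p f' r * gFun p f' r)
      + (4 * ((N : ℝ) - 1) * (p - 1) * (2 - p) / (3 * p - 2) ^ 2)
        * (alphaFun N p r * (gFun p f' r / r) * gFun p f' r)
      + ((((N : ℝ) - 1) / (3 * p - 2) ^ 2)
          * (p * (3 * p - 2) + 2 * ((N : ℝ) - 1) * (p - 1) * (2 - p)))
        * (alphaFun N p r * (gFun p f' r / r) * (gFun p f' r / r))))
      (nhdsWithin 0 (Ioi (0:ℝ))) (nhds 0) := by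
    have := (tendsto_const_nhds (x := -(1/2:ℝ))).mul
      ((((tendsto_const_nhds (x := 2 * (p - 1) * (2 - p) / (3 * p - 2) ^ 2)).mul
          ((hα0.mul hgc).mul hgc)).add
        ((tendsto_const_nhds (x := 4 * ((N : ℝ) - 1) * (p - 1) * (2 - p) / (3 * p - 2) ^ 2)).mul
          ((hα0.mul hslope).mul hgc))).add
        ((tendsto_const_nhds (x := (((N : ℝ) - 1) / (3 * p - 2) ^ 2)
            * (p * (3 * p - 2) + 2 * ((N : ℝ) - 1) * (p - 1) * (2 - p)))).mul
          ((hα0.mul hslope).mul hslope)))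
    simpa using this
  have l4 : Tendsto (fun r => ((p - 1) / p) * (alphaFun N p r * gFun p f' r ^ (p / (p - 1))))
      (nhdsWithin 0 (Ioi (0:ℝ))) (nhds 0) := by
    apply squeeze_zero_norm' (a := fun r => |(p - 1) / p| * alphaFun N p r)
    · have hball := Metric.tendsto_nhds.mp hgc 1 one_pos
      filter_upwards [hball, self_mem_nhdsWithin] with r hb hr
      have hαpos : 0 ≤ alphaFun N p r := Real.rpow_nonneg (rho_pos N hr).le _
      rw [Real.dist_eq, sub_zero] at hb
      have h1 : |gFun p f' r ^ (p / (p - 1))| ≤ 1 := by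
        refine (Real.abs_rpow_le_abs_rpow _ _).trans ?_
        exact Real.rpow_le_one (abs_nonneg _) hb.le (le_of_lt (by apply div_pos <;> linarith))
      calc ‖(p - 1) / p * (alphaFun N p r * gFun p f' r ^ (p / (p - 1)))‖
          = |(p - 1) / p| * (alphaFun N p r * |gFun p f' r ^ (p / (p - 1))|) := by
            rw [Real.norm_eq_abs, abs_mul, abs_mul, abs_of_nonneg hαpos]
        _ ≤ |(p - 1) / p| * (alphaFun N p r * 1) := by
            apply mul_le_mul_of_nonneg_left _ (abs_nonneg _)
            exact mul_le_mul_of_nonneg_left h1 hαpos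
        _ = |(p - 1) / p| * alphaFun N p r := by ring
    · simpa using (tendsto_const_nhds (x := |(p - 1) / p|)).mul hα0
  have := ((l1.add l2).add l3).add l4
  simpa using this

/-- `J(r;a) → 0` as `r → 0⁺`, `J'(r;a) = G(r) g(r;a)²` on `(0, R₁(a))`
(a point `r > 0` lies in `(0, R₁(a))` iff `g(·;a) > 0` on `(0,r]`), and `J(·;a)` is
increasing on `(0, min{r_G, R₁(a)})` and decreasing on `(r_G, R₁(a))`. -/
theorem stmt14 (N : ℕ) (hN : 2 ≤ N) (p : ℝ)
    (hp1 : 2 * (N : ℝ) / ((N : ℝ) + 1) < p) (hp2 : p < 2)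
    (a : ℝ) (ha : 0 < a)
    (f f' F' : ℝ → ℝ) (hf : IsProfileSol N p a f f' F') :
    Filter.Tendsto (Jfun N p f' F') (nhdsWithin 0 (Set.Ioi 0)) (nhds 0) ∧
    (∀ r, 0 < r → (∀ s, 0 < s → s ≤ r → 0 < gFun p f' s) →
      HasDerivAt (Jfun N p f' F') (Gfun N p r * gFun p f' r ^ 2) r) ∧
    (∀ rG : ℝ, 0 < rG →
      (∀ r, 0 < r → r < rG → 0 < Pcub N p (1 / r)) →
      (∀ r, rG < r → Pcub N p (1 / r) < 0) →
      (∀ r₁ r₂, 0 < r₁ → r₁ < r₂ → r₂ < rG →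
        (∀ s, 0 < s → s ≤ r₂ → 0 < gFun p f' s) →
        Jfun N p f' F' r₁ < Jfun N p f' F' r₂) ∧
      (∀ r₁ r₂, rG < r₁ → r₁ < r₂ →
        (∀ s, 0 < s → s ≤ r₂ → 0 < gFun p f' s) →
        Jfun N p f' F' r₂ < Jfun N p f' F' r₁)) := by
  have hN2 : (2:ℝ) ≤ (N:ℝ) := by exact_mod_cast hN
  have hp1' : 1 < p := by
    have h : 1 < 2 * (N:ℝ) / ((N:ℝ) + 1) := by
      rw [lt_div_iff₀ (by linarith)]
      linarith
    linarith
  refine ⟨J_tendsto N hN hp1' hp2 a f f' F' hf, fun r hr hg => J_hasDerivAt N hN hp1' hp2 a f f' F' hf hr hg, ?_⟩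
  intro rG hrG hPpos hPneg
  constructor
  · intro r₁ r₂ h1 h12 h2G hgpos
    have hd : ∀ x ∈ Icc r₁ r₂, HasDerivAt (Jfun N p f' F') (Gfun N p x * gFun p f' x ^ 2) x :=
      fun x hx => J_hasDerivAt N hN hp1' hp2 a f f' F' hf (lt_of_lt_of_le h1 hx.1)
        (fun s hs hsx => hgpos s hs (hsx.trans hx.2))
    have hcont : ContinuousOn (Jfun N p f' F') (Icc r₁ r₂) :=
      fun x hx => ((hd x hx).continuousAt).continuousWithinAt
    have hmono := strictMonoOn_of_deriv_pos (convex_Icc r₁ r₂) hcont ?_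
    · exact hmono (left_mem_Icc.mpr h12.le) (right_mem_Icc.mpr h12.le) h12
    · intro x hx
      rw [interior_Icc] at hx
      have hx0 : 0 < x := lt_trans h1 hx.1
      rw [(hd x ⟨hx.1.le, hx.2.le⟩).deriv]
      have hG : 0 < Gfun N p x := by
        rw [Gfun]
        have h1' : 0 < p / (3 * p - 2) ^ 3 := by
          exact div_pos (by linarith) (pow_pos (by linarith) 3)
        have h2' : 0 < rho N x ^ (2 * p / (3 * p - 2)) :=
          Real.rpow_pos_of_pos (rho_pos N hx0) _
        have h3' : 0 < Pcub N p (1 / x) := hPpos x hx0 (lt_trans hx.2 h2G)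
        positivity
      exact mul_pos hG (pow_pos (hgpos x hx0 hx.2.le) 2)
  · intro r₁ r₂ h1 h12 hgpos
    have hr₁0 : 0 < r₁ := lt_trans hrG h1
    have hd : ∀ x ∈ Icc r₁ r₂, HasDerivAt (Jfun N p f' F') (Gfun N p x * gFun p f' x ^ 2) x :=
      fun x hx => J_hasDerivAt N hN hp1' hp2 a f f' F' hf (lt_of_lt_of_le hr₁0 hx.1)
        (fun s hs hsx => hgpos s hs (hsx.trans hx.2))
    have hcont : ContinuousOn (Jfun N p f' F') (Icc r₁ r₂) :=
      fun x hx => ((hd x hx).continuousAt).continuousWithinAt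
    have hanti := strictAntiOn_of_deriv_neg (convex_Icc r₁ r₂) hcont ?_
    · exact hanti (left_mem_Icc.mpr h12.le) (right_mem_Icc.mpr h12.le) h12
    · intro x hx
      rw [interior_Icc] at hx
      have hx0 : 0 < x := lt_trans hr₁0 hx.1
      rw [(hd x ⟨hx.1.le, hx.2.le⟩).deriv]
      have hG : Gfun N p x < 0 := by
        rw [Gfun]
        have h1' : 0 < p / (3 * p - 2) ^ 3 := by
          exact div_pos (by linarith) (pow_pos (by linarith) 3)
        have h2' : 0 < rho N x ^ (2 * p / (3 * p - 2)) :=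
          Real.rpow_pos_of_pos (rho_pos N hx0) _
        have h3' : Pcub N p (1 / x) < 0 := hPneg x (lt_trans h1 hx.1)
        exact mul_neg_of_pos_of_neg (mul_pos h1' h2') h3'
      exact mul_neg_of_neg_of_pos hG (pow_pos (hgpos x hx0 hx.2.le) 2)
end

section
/- Let N ≥ 2 be an integer and p ∈ (2N/(N+1), 2). The unique solution ψ ∈ C¹([0,∞)) of the ODE (|ψ'|^{p-2}ψ')'(s) + ((N-1)/s)(|ψ'|^{p-2}ψ')(s) + ψ(s) = 0 for s > 0 with ψ(0) = 1 and ψ'(0) = 0 (and with s ↦ |ψ'(s)|^{p-2}ψ'(s) of class C¹ on [0,∞)) has a first positive zero: there exists s_0 ∈ (0,∞) such that ψ(s_0) = 0, ψ'(s_0) < 0, and ψ'(s) < 0 < ψ(s) for all s ∈ (0,s_0). -/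
open Real Set Filter MeasureTheory

/-- `ψ` solves `(|ψ'|^{p-2}ψ')' + ((N-1)/s)(|ψ'|^{p-2}ψ') + ψ = 0` on `(0,∞)` with
`ψ(0) = 1`, `ψ'(0) = 0`, in the class C¹ with `s ↦ |ψ'(s)|^{p-2}ψ'(s)` also C¹ on `[0,∞)`. -/
def IsPsiSol (N : ℕ) (p : ℝ) (ψ ψ' Ψ' : ℝ → ℝ) : Prop :=
  (∀ s ∈ Ici (0:ℝ), HasDerivWithinAt ψ (ψ' s) (Ici 0) s) ∧
  ContinuousOn ψ' (Ici 0) ∧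
  (∀ s ∈ Ici (0:ℝ), HasDerivWithinAt (fun t => |ψ' t| ^ (p - 2) * ψ' t) (Ψ' s) (Ici 0) s) ∧
  ContinuousOn Ψ' (Ici 0) ∧
  (∀ s, 0 < s → Ψ' s + (((N : ℝ) - 1) / s) * (|ψ' s| ^ (p - 2) * ψ' s) + ψ s = 0) ∧
  ψ 0 = 1 ∧ ψ' 0 = 0

lemma aux_phi_nonneg {p x : ℝ} (hx : 0 ≤ x) : 0 ≤ |x| ^ (p-2) * x :=
  mul_nonneg (Real.rpow_nonneg (abs_nonneg x) _) hx

lemma aux_phi_eq {p x : ℝ} (hp : 1 < p) (hx : x ≤ 0) :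
    |x| ^ (p-2) * x = -(|x| ^ (p-1)) := by
  rcases eq_or_lt_of_le hx with h | h
  · subst h
    simp [Real.zero_rpow (by intro h'; linarith [sub_eq_zero.mp h'] : p - 1 ≠ 0)]
  · have habs : |x| = -x := abs_of_neg h
    have hne : |x| ≠ 0 := abs_ne_zero.mpr (ne_of_lt h)
    rw [show p - 1 = (p-2) + 1 by ring, Real.rpow_add_one hne, habs]
    ring

lemma aux_rpow_cancel {p A x : ℝ} (hp : 1 < p) (hA : 0 ≤ A) (h : A ≤ |x| ^ (p-1)) :
    A ^ (p-1)⁻¹ ≤ |x| := by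
  have h1 : A ^ (p-1)⁻¹ ≤ (|x| ^ (p-1)) ^ (p-1)⁻¹ :=
    Real.rpow_le_rpow hA h (inv_nonneg.mpr (by linarith))
  rwa [Real.rpow_rpow_inv (abs_nonneg x) (by intro h'; linarith [sub_eq_zero.mp h'])] at h1

lemma myAnti {f f' : ℝ → ℝ} {a b : ℝ} (hc : ContinuousOn f (Icc a b))
    (hd : ∀ x ∈ Ioo a b, HasDerivAt f (f' x) x) (h0 : ∀ x ∈ Ioo a b, f' x ≤ 0) :
    AntitoneOn f (Icc a b) := by
  apply antitoneOn_of_deriv_nonpos (convex_Icc a b) hc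
  · rw [interior_Icc]; exact fun x hx => (hd x hx).differentiableAt.differentiableWithinAt
  · rw [interior_Icc]; intro x hx; rw [(hd x hx).deriv]; exact h0 x hx

lemma myMono {f f' : ℝ → ℝ} {a b : ℝ} (hc : ContinuousOn f (Icc a b))
    (hd : ∀ x ∈ Ioo a b, HasDerivAt f (f' x) x) (h0 : ∀ x ∈ Ioo a b, 0 ≤ f' x) :
    MonotoneOn f (Icc a b) := by
  apply monotoneOn_of_deriv_nonneg (convex_Icc a b) hc
  · rw [interior_Icc]; exact fun x hx => (hd x hx).differentiableAt.differentiableWithinAt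
  · rw [interior_Icc]; intro x hx; rw [(hd x hx).deriv]; exact h0 x hx

lemma myStrictAnti {f f' : ℝ → ℝ} {D : Set ℝ} (hD : Convex ℝ D) (hc : ContinuousOn f D)
    (hd : ∀ x ∈ interior D, HasDerivAt f (f' x) x) (h0 : ∀ x ∈ interior D, f' x < 0) :
    StrictAntiOn f D := by
  apply strictAntiOn_of_deriv_neg hD hc
  intro x hx; rw [(hd x hx).deriv]; exact h0 x hx

set_option maxHeartbeats 1600000 in
theorem stmt19aux (N : ℕ) (hN : 2 ≤ N) (p : ℝ)
    (hp1 : 2 * (N : ℝ) / ((N : ℝ) + 1) < p) (hp2 : p < 2)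
    (ψ ψ' Ψ' : ℝ → ℝ)
    (hdψ : ∀ s ∈ Ici (0:ℝ), HasDerivWithinAt ψ (ψ' s) (Ici 0) s)
    (hdΦ : ∀ s ∈ Ici (0:ℝ), HasDerivWithinAt (fun t => |ψ' t| ^ (p - 2) * ψ' t) (Ψ' s) (Ici 0) s)
    (hode : ∀ s, 0 < s → Ψ' s + (((N : ℝ) - 1) / s) * (|ψ' s| ^ (p - 2) * ψ' s) + ψ s = 0)
    (hψ0 : ψ 0 = 1) (hψ'0 : ψ' 0 = 0) :
    ∃ s₀ : ℝ, 0 < s₀ ∧ ψ s₀ = 0 ∧ ψ' s₀ < 0 ∧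
      ∀ s, 0 < s → s < s₀ → ψ' s < 0 ∧ 0 < ψ s := by
  have hNR : (2:ℝ) ≤ (N:ℝ) := by exact_mod_cast hN
  have hp0 : 1 < p := by
    have h1 : (1:ℝ) < 2 * N / (N + 1) := by rw [lt_div_iff₀ (by linarith)]; linarith
    linarith
  have hp1' : 2 * (N:ℝ) < p * ((N:ℝ) + 1) := by
    rw [div_lt_iff₀ (by linarith)] at hp1; linarith
  set q : ℝ := (p - 1)⁻¹ with hqdef
  have hpm : 0 < p - 1 := by linarith
  have hq : (p - 1) * q = 1 := mul_inv_cancel₀ (ne_of_gt hpm)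
  have hqpos : 0 < q := by rw [hqdef]; exact inv_pos.mpr hpm
  clear_value q
  have hq1 : 1 < q := by nlinarith [hq, hqpos]
  have hqN : ((N:ℝ) - 1) * q < (N:ℝ) + 1 := by
    have key : (N:ℝ) - 1 < ((N:ℝ)+1)*(p-1) := by nlinarith
    calc ((N:ℝ)-1)*q < (((N:ℝ)+1)*(p-1))*q := mul_lt_mul_of_pos_right key hqpos
      _ = ((N:ℝ)+1)*((p-1)*q) := by ring
      _ = (N:ℝ)+1 := by rw [hq]; ring
  set n1 : ℕ := N - 1 with hn1def
  have hn1 : ((n1:ℕ) : ℝ) = (N:ℝ) - 1 := by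
    rw [hn1def]; push_cast [Nat.cast_sub (show 1 ≤ N by omega)]; ring
  have hn1pos : 1 ≤ n1 := by omega
  have hn1N : n1 + 1 = N := by omega
  clear_value n1
  set Φ : ℝ → ℝ := fun s => |ψ' s| ^ (p - 2) * ψ' s with hΦdef
  set w : ℝ → ℝ := fun s => s ^ n1 * Φ s with hwdef
  have hodeΦ : ∀ s, 0 < s → Ψ' s + (((N : ℝ) - 1) / s) * Φ s + ψ s = 0 := hode
  clear_value Φ w
  have hΦ0 : Φ 0 = 0 := by rw [hΦdef]; simp [hψ'0]
  have hw0 : w 0 = 0 := by rw [hwdef]; simp [zero_pow (show n1 ≠ 0 by omega)]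
  have hψc : ContinuousOn ψ (Ici 0) := fun s hs => (hdψ s hs).continuousWithinAt
  have hΦc : ContinuousOn Φ (Ici 0) := fun s hs => (hdΦ s hs).continuousWithinAt
  have hwc : ContinuousOn w (Ici 0) := by
    rw [hwdef]; exact (continuous_pow n1).continuousOn.mul hΦc
  have hψd : ∀ s, 0 < s → HasDerivAt ψ (ψ' s) s :=
    fun s hs => (hdψ s hs.le).hasDerivAt (Ici_mem_nhds hs)
  have hΦd : ∀ s, 0 < s → HasDerivAt Φ (Ψ' s) s :=
    fun s hs => (hdΦ s hs.le).hasDerivAt (Ici_mem_nhds hs)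
  have hwd : ∀ s, 0 < s → HasDerivAt w (-(s ^ n1 * ψ s)) s := by
    intro s hs
    have h1 := (hasDerivAt_pow n1 s).mul (hΦd s hs)
    have he : -(s ^ n1 * ψ s) = (n1:ℝ) * s ^ (n1 - 1) * Φ s + s ^ n1 * Ψ' s := by
      have hΨ : Ψ' s = -(((N:ℝ) - 1) / s * Φ s) - ψ s := by
        have := hodeΦ s hs; linarith
      have hpow : s ^ n1 = s ^ (n1 - 1) * s := by
        conv_lhs => rw [← Nat.sub_add_cancel hn1pos]
        rw [pow_succ]
      rw [hΨ, hn1, hpow]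
      field_simp
      ring
    rw [hwdef, he]
    exact h1
  have hΦneg_imp : ∀ s, Φ s < 0 → ψ' s < 0 := by
    intro s h
    by_contra hcon
    push_neg at hcon
    have h2 := aux_phi_nonneg (p := p) hcon
    have : Φ s = |ψ' s| ^ (p-2) * ψ' s := by rw [hΦdef]
    linarith [this ▸ h2]
  -- strict antitonicity of w on [0,b] when ψ > 0 on (0,b)
  have hwanti : ∀ b, 0 < b → (∀ s, s ∈ Ioo (0:ℝ) b → 0 < ψ s) → StrictAntiOn w (Icc 0 b) := by
    intro b hb hpos
    apply myStrictAnti (f' := fun s => -(s ^ n1 * ψ s)) (convex_Icc 0 b)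
      (hwc.mono Icc_subset_Ici_self)
    · rw [interior_Icc]; exact fun x hx => hwd x hx.1
    · rw [interior_Icc]; intro x hx
      have := hpos x hx
      have hxpos := hx.1
      have : 0 < x ^ n1 * ψ x := by positivity
      linarith
  have hwneg : ∀ b, 0 < b → (∀ s, s ∈ Ioo (0:ℝ) b → 0 < ψ s) →
      ∀ s, s ∈ Ioc (0:ℝ) b → w s < 0 := by
    intro b hb hpos s hs
    have := hwanti b hb hpos (left_mem_Icc.mpr hb.le) ⟨hs.1.le, hs.2⟩ hs.1
    rw [hw0] at this
    exact this
  have hψ'negOf : ∀ s, 0 < s → w s < 0 → ψ' s < 0 := by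
    intro s hs hw
    apply hΦneg_imp
    have hws : w s = s ^ n1 * Φ s := by rw [hwdef]
    nlinarith [pow_pos hs n1, hws ▸ hw]
  -- the key existence of a nonpositive value
  have hex : ∃ s1, 0 < s1 ∧ ψ s1 ≤ 0 := by
    by_contra hcon
    push_neg at hcon
    have hH : ∀ s, 0 < s → 0 < ψ s := fun s hs => hcon s hs
    have hwantiI : StrictAntiOn w (Ici 0) := by
      apply myStrictAnti (f' := fun s => -(s ^ n1 * ψ s)) (convex_Ici 0) hwc
      · rw [interior_Ici]; exact fun x hx => hwd x hx
      · rw [interior_Ici]; intro x hx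
        have hx0 : 0 < x := hx
        have h1 := hH x hx0
        have h2 : 0 < x ^ n1 * ψ x := mul_pos (pow_pos hx0 n1) h1
        linarith
    have hwnegI : ∀ s, 0 < s → w s < 0 := by
      intro s hs
      have h := hwantiI self_mem_Ici (mem_Ici.mpr hs.le) hs
      rw [hw0] at h
      exact h
    have hψ'neg : ∀ s, 0 < s → ψ' s < 0 := fun s hs => hψ'negOf s hs (hwnegI s hs)
    have hψanti : StrictAntiOn ψ (Ici 0) := by
      apply myStrictAnti (f' := ψ') (convex_Ici 0) hψc
      · rw [interior_Ici]; exact fun x hx => hψd x hx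
      · rw [interior_Ici]; exact fun x hx => hψ'neg x hx
    -- key pointwise estimate
    have h3 : ∀ r, 0 < r → w r ≤ -((r/2)^N * ψ r) := by
      intro r hr
      have hr2 : 0 < r/2 := by linarith
      set K : ℝ := (r/2)^n1 * ψ r with hKdef
      have hanti : AntitoneOn (fun t => w t + K * t) (Icc (r/2) r) := by
        apply myAnti (f' := fun x => -(x ^ n1 * ψ x) + K)
        · exact (hwc.mono (fun x hx => le_trans hr2.le hx.1)).add
            ((continuous_const.mul continuous_id).continuousOn)
        · intro x hx
          have hx0 : 0 < x := lt_trans hr2 hx.1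
          have := (hwd x hx0).add ((hasDerivAt_id x).const_mul K)
          exact this.congr_deriv (by ring)
        · intro x hx
          have hx0 : 0 < x := lt_trans hr2 hx.1
          have ha1 : (r/2)^n1 ≤ x^n1 := pow_le_pow_left₀ hr2.le hx.1.le n1
          have ha2 : ψ r ≤ ψ x :=
            (hψanti (mem_Ici.mpr hx0.le) (mem_Ici.mpr hr.le) hx.2).le
          have ha3 : K ≤ x ^ n1 * ψ x := by
            rw [hKdef]
            exact mul_le_mul ha1 ha2 (hH r hr).le (pow_nonneg hx0.le n1)
          linarith
      have hend : w r + K * r ≤ w (r/2) + K * (r/2) :=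
        hanti (left_mem_Icc.mpr (by linarith)) (right_mem_Icc.mpr (by linarith)) (by linarith)
      have hwr2 : w (r/2) < 0 := hwnegI (r/2) hr2
      have hKN : K * (r/2) = (r/2)^N * ψ r := by
        rw [hKdef, ← hn1N, pow_succ]; ring
      rw [← hKN]
      linarith
    have hΦlb : ∀ r, 0 < r → r * ψ r / 2^N ≤ -Φ r := by
      intro r hr
      have h3r := h3 r hr
      have hwr : w r = r ^ n1 * Φ r := by rw [hwdef]
      have hhalf : ((r/2:ℝ))^N = r^n1 * (r / 2^N) := by
        rw [div_pow, ← hn1N, pow_succ]; ring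
      have hrn : (0:ℝ) < r^n1 := pow_pos hr n1
      have h5 : r^n1 * Φ r ≤ r^n1 * (-(r / 2^N * ψ r)) := by
        rw [← hwr]; rw [hhalf] at h3r; linarith
      have h6 := le_of_mul_le_mul_left h5 hrn
      have h7 : r * ψ r / 2^N = r / 2^N * ψ r := by ring
      rw [h7]
      linarith
    have h4 : ∀ r, 0 < r → (r * ψ r / 2^N) ^ q ≤ -ψ' r := by
      intro r hr
      have hψ'r := hψ'neg r hr
      have hphieq : Φ r = -(|ψ' r| ^ (p-1)) := by
        rw [hΦdef]; exact aux_phi_eq hp0 hψ'r.le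
      have h6 : r * ψ r / 2^N ≤ |ψ' r| ^ (p-1) := by
        have := hΦlb r hr; rw [hphieq] at this; linarith
      have h7 := aux_rpow_cancel hp0
        (div_nonneg (mul_nonneg hr.le (hH r hr).le) (by positivity)) h6
      rw [abs_of_neg hψ'r] at h7
      rw [hqdef]
      exact h7
    -- decay of ψ
    set D2 : ℝ := 2^N with hD2def
    have hD2pos : (0:ℝ) < D2 := by rw [hD2def]; positivity
    clear_value D2
    set κ : ℝ := (q-1) / D2^q with hκdef
    have hκpos : 0 < κ := by
      rw [hκdef]
      have h1 : (0:ℝ) < D2 ^ q := Real.rpow_pos_of_pos hD2pos q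
      have h2 : (0:ℝ) < q - 1 := by linarith
      positivity
    clear_value κ
    have hu : ∀ r, 2 ≤ r → κ/(2*(q+1)) * r^(q+1) ≤ ψ r ^ (1-q) := by
      intro r hr
      have hmono : MonotoneOn (fun t => ψ t ^ (1-q) - κ * (t^(q+1)/(q+1))) (Icc 1 r) := by
        apply myMono
          (f' := fun x => ψ' x * (1-q) * ψ x ^ (1-q-1) - κ * ((q+1) * x^(q+1-1) / (q+1)))
        · apply ContinuousOn.sub
          · apply ContinuousOn.rpow_const (hψc.mono (fun x hx => le_trans zero_le_one hx.1))
            intro x hx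
            exact Or.inl (ne_of_gt (hH x (lt_of_lt_of_le zero_lt_one hx.1)))
          · exact continuousOn_const.mul
              ((ContinuousOn.rpow_const (continuous_id.continuousOn)
                (fun x hx => Or.inr (by linarith))).div_const (q+1))
        · intro x hx
          have hx0 : (0:ℝ) < x := lt_trans zero_lt_one hx.1
          have d1 : HasDerivAt (fun t => ψ t ^ (1-q)) (ψ' x * (1-q) * ψ x ^ (1-q-1)) x :=
            (hψd x hx0).rpow_const (Or.inl (ne_of_gt (hH x hx0)))
          have d2 : HasDerivAt (fun t : ℝ => κ * (t^(q+1)/(q+1)))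
              (κ * ((q+1) * x^(q+1-1) / (q+1))) x :=
            ((Real.hasDerivAt_rpow_const (Or.inl (ne_of_gt hx0))).div_const (q+1)).const_mul κ
          exact d1.sub d2
        · intro x hx
          have hx0 : (0:ℝ) < x := lt_trans zero_lt_one hx.1
          have hψx : 0 < ψ x := hH x hx0
          have e1 : (1:ℝ) - q - 1 = -q := by ring
          have e2 : q + 1 - 1 = q := by ring
          rw [e1, e2]
          have h4x := h4 x hx0
          have hid : ψ x ^ (-q) * (x * ψ x / D2) ^ q = x^q / D2^q := by
            rw [Real.div_rpow (by positivity) hD2pos.le, Real.mul_rpow hx0.le hψx.le,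
              Real.rpow_neg hψx.le]
            have hne : ψ x ^ q ≠ 0 := ne_of_gt (Real.rpow_pos_of_pos hψx q)
            field_simp
          have m1 : x^q / D2^q ≤ ψ x ^ (-q) * (-ψ' x) := by
            calc x^q/D2^q = ψ x^(-q) * (x*ψ x/D2)^q := hid.symm
              _ ≤ ψ x^(-q) * (-ψ' x) :=
                  mul_le_mul_of_nonneg_left h4x (Real.rpow_nonneg hψx.le _)
          have hqq : (q+1) ≠ 0 := by positivity
          have e3 : κ * ((q+1) * x^q / (q+1)) = κ * x^q := by field_simp
          rw [e3, hκdef]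
          have m2 : (q-1) * (x^q/D2^q) ≤ (q-1) * (ψ x^(-q)*(-ψ' x)) :=
            mul_le_mul_of_nonneg_left m1 (by linarith)
          have e4 : ψ' x * (1-q) * ψ x ^ (-q) = (q-1) * (ψ x^(-q)*(-ψ' x)) := by ring
          have e5 : (q-1)/D2^q * x^q = (q-1) * (x^q/D2^q) := by ring
          rw [e4, e5]
          linarith
      have hend : ψ (1:ℝ) ^ (1-q) - κ * ((1:ℝ)^(q+1)/(q+1)) ≤
          ψ r ^ (1-q) - κ * (r^(q+1)/(q+1)) :=
        hmono (left_mem_Icc.mpr (by linarith)) (right_mem_Icc.mpr (by linarith)) (by linarith)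
      rw [Real.one_rpow] at hend
      have hψ1 : 0 < ψ (1:ℝ) ^ (1-q) := Real.rpow_pos_of_pos (hH 1 one_pos) _
      have h7 : (2:ℝ) ≤ r^(q+1) := by
        calc (2:ℝ) ≤ r := hr
          _ = r ^ (1:ℝ) := (Real.rpow_one r).symm
          _ ≤ r^(q+1) := Real.rpow_le_rpow_of_exponent_le (by linarith) (by linarith)
      have hq1pos : (0:ℝ) < q + 1 := by linarith
      have h8 : κ/(q+1) * (r^(q+1)/2) ≤ κ/(q+1) * (r^(q+1) - 1) :=
        mul_le_mul_of_nonneg_left (by linarith) (by positivity)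
      have e6 : κ/(2*(q+1)) * r^(q+1) = κ/(q+1) * (r^(q+1)/2) := by
        field_simp
      have e7 : κ * (r^(q+1)/(q+1)) = κ/(q+1) * r^(q+1) := by ring
      have e8 : κ * ((1:ℝ)/(q+1)) = κ/(q+1) := by ring
      have e9 : κ/(q+1) * (r^(q+1) - 1) = κ/(q+1) * r^(q+1) - κ/(q+1) := by ring
      rw [e6]
      rw [e7] at hend
      rw [e9] at h8
      linarith
    set c3 : ℝ := κ/(2*(q+1)) with hc3def
    have hc3pos : 0 < c3 := by
      rw [hc3def]
      have : (0:ℝ) < q + 1 := by linarith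
      positivity
    clear_value c3
    have hub : ∀ s, 2 ≤ s → ψ s ^ (q-1) ≤ (c3 * s^(q+1))⁻¹ := by
      intro s hs
      have hs0 : (0:ℝ) < s := by linarith
      have hψs : 0 < ψ s := hH s hs0
      have hus := hu s hs
      have heq : ψ s ^ (1-q) = (ψ s ^ (q-1))⁻¹ := by
        rw [show (1:ℝ)-q = -(q-1) by ring, Real.rpow_neg hψs.le]
      rw [heq] at hus
      have hBpos : 0 < c3 * s^(q+1) := by positivity
      rw [← inv_inv (ψ s ^ (q-1))]
      exact inv_anti₀ hBpos hus
    -- lower bound for ψ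
    have hw2 : w 2 < 0 := hwnegI 2 two_pos
    set δ : ℝ := -w 2 with hδdef
    have hδpos : 0 < δ := by rw [hδdef]; linarith
    clear_value δ
    have hwle : ∀ s, 2 ≤ s → w s ≤ -δ := by
      intro s hs
      rcases eq_or_lt_of_le hs with h | h
      · rw [← h, hδdef]; simp
      · have := hwantiI (mem_Ici.mpr (by norm_num : (0:ℝ) ≤ 2)) (mem_Ici.mpr (by linarith)) h
        rw [hδdef]; linarith
    have hψ'lb : ∀ s, 2 ≤ s → (δ / s^n1) ^ q ≤ -ψ' s := by
      intro s hs
      have hs0 : (0:ℝ) < s := by linarith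
      have hsn : (0:ℝ) < s^n1 := pow_pos hs0 n1
      have hΦs : δ / s^n1 ≤ -Φ s := by
        have h1 : s^n1 * Φ s ≤ -δ := by
          have h2 := hwle s hs
          rw [hwdef] at h2
          exact h2
        rw [div_le_iff₀ hsn]
        nlinarith [h1]
      have hphieq : Φ s = -(|ψ' s|^(p-1)) := by
        rw [hΦdef]; exact aux_phi_eq hp0 (hψ'neg s hs0).le
      have h6 : δ / s^n1 ≤ |ψ' s|^(p-1) := by rw [hphieq] at hΦs; linarith
      have h7 := aux_rpow_cancel hp0 (by positivity) h6
      rw [abs_of_neg (hψ'neg s hs0)] at h7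
      rw [hqdef]
      exact h7
    have hlow : ∀ s, 2 ≤ s → (δ/(2*s)^n1)^q * s ≤ ψ s := by
      intro s hs
      have hs0 : (0:ℝ) < s := by linarith
      have h2s : (0:ℝ) < 2*s := by linarith
      set K2 : ℝ := (δ/(2*s)^n1)^q with hK2def
      have hanti : AntitoneOn (fun t => ψ t + K2 * t) (Icc s (2*s)) := by
        apply myAnti (f' := fun x => ψ' x + K2)
        · exact (hψc.mono (fun x hx => le_trans hs0.le hx.1)).add
            ((continuous_const.mul continuous_id).continuousOn)
        · intro x hx
          have hx0 : 0 < x := lt_trans hs0 hx.1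
          have := (hψd x hx0).add ((hasDerivAt_id x).const_mul K2)
          exact this.congr_deriv (by ring)
        · intro x hx
          have hx2 : 2 ≤ x := le_trans hs hx.1.le
          have hx0 : (0:ℝ) < x := by linarith
          have hlb := hψ'lb x hx2
          have hmono2 : K2 ≤ (δ/x^n1)^q := by
            rw [hK2def]
            have hfrac : (0:ℝ) ≤ δ/(2*s)^n1 :=
              div_nonneg hδpos.le (pow_pos (by linarith : (0:ℝ) < 2*s) n1).le
            apply Real.rpow_le_rpow hfrac ?_ hqpos.le
            gcongr
            exact hx.2.le
          linarith
      have hend : ψ (2*s) + K2 * (2*s) ≤ ψ s + K2 * s :=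
        hanti (left_mem_Icc.mpr (by linarith)) (right_mem_Icc.mpr (by linarith)) (by linarith)
      have hψ2s : 0 < ψ (2*s) := hH (2*s) (by linarith)
      linarith
    -- the contradiction
    set m : ℝ := q*(q-1) with hmdef
    set γ : ℝ := (q-1) + (q+1) - (n1:ℝ)*m with hγdef
    have hγpos : 0 < γ := by
      rw [hγdef, hmdef, hn1]
      nlinarith [hqN, hqpos, hq1]
    clear_value m γ
    set c5 : ℝ := (δ^m / 2^((n1:ℝ)*m)) * c3 with hc5def
    have hc5pos : 0 < c5 := by
      rw [hc5def]
      have h1 : (0:ℝ) < δ^m := Real.rpow_pos_of_pos hδpos m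
      have h2 : (0:ℝ) < (2:ℝ)^((n1:ℝ)*m) := Real.rpow_pos_of_pos two_pos _
      positivity
    have hkey : ∀ s, 2 ≤ s → c5 * s^γ ≤ 1 := by
      intro s hs
      have hs0 : (0:ℝ) < s := by linarith
      have h2s : (0:ℝ) < 2*s := by linarith
      have hψs : 0 < ψ s := hH s hs0
      set A : ℝ := (δ/(2*s)^n1)^q * s with hAdef
      have hb : (0:ℝ) < (2*s)^n1 := pow_pos h2s n1
      have hApos : 0 < A := by
        rw [hAdef]
        have : (0:ℝ) < (δ/(2*s)^n1)^q := Real.rpow_pos_of_pos (by positivity) q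
        positivity
      have h1 : A ^ (q-1) ≤ ψ s ^ (q-1) :=
        Real.rpow_le_rpow hApos.le (hlow s hs) (by linarith)
      have h2 : A ^ (q-1) ≤ (c3 * s^(q+1))⁻¹ := le_trans h1 (hub s hs)
      have hBpos : 0 < c3 * s^(q+1) := by positivity
      have h3 : A^(q-1) * (c3 * s^(q+1)) ≤ 1 := by
        calc A^(q-1) * (c3*s^(q+1))
            ≤ (c3*s^(q+1))⁻¹ * (c3*s^(q+1)) := mul_le_mul_of_nonneg_right h2 hBpos.le
          _ = 1 := inv_mul_cancel₀ (ne_of_gt hBpos)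
      have hiden : A^(q-1) * (c3 * s^(q+1)) = c5 * s^γ := by
        have hXpos : (0:ℝ) < δ/(2*s)^n1 := by positivity
        have e1 : A^(q-1) = (δ/(2*s)^n1)^m * s^(q-1) := by
          rw [hAdef, Real.mul_rpow (Real.rpow_nonneg hXpos.le _) hs0.le, hmdef,
            Real.rpow_mul hXpos.le]
        have e2 : (δ/(2*s)^n1)^m = δ^m / (2^((n1:ℝ)*m) * s^((n1:ℝ)*m)) := by
          rw [Real.div_rpow hδpos.le hb.le]
          congr 1
          rw [← Real.rpow_natCast (2*s) n1, ← Real.rpow_mul h2s.le,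
            Real.mul_rpow (by norm_num) hs0.le]
        have h2pow : (0:ℝ) < (2:ℝ)^((n1:ℝ)*m) := Real.rpow_pos_of_pos two_pos _
        have hspow : (0:ℝ) < s^((n1:ℝ)*m) := Real.rpow_pos_of_pos hs0 _
        rw [e1, e2, hc5def, hγdef]
        rw [show (q-1) + (q+1) - (n1:ℝ)*m = ((q-1) + (q+1)) + (-((n1:ℝ)*m)) by ring,
          Real.rpow_add hs0, Real.rpow_add hs0, Real.rpow_neg hs0.le]
        field_simp
        rw [Real.rpow_add hs0, Real.rpow_add hs0]
        simp only [Real.rpow_one]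
        ring
      rw [← hiden]
      exact h3
    set sbig : ℝ := max 2 ((1/c5 + 1)^γ⁻¹) with hsbigdef
    have hs2 : 2 ≤ sbig := le_max_left _ _
    have hbase : (0:ℝ) ≤ (1/c5+1)^γ⁻¹ := Real.rpow_nonneg (by positivity) _
    have hbig2 : (1/c5 + 1) ≤ sbig^γ := by
      calc 1/c5 + 1 = ((1/c5+1)^γ⁻¹)^γ :=
            (Real.rpow_inv_rpow (by positivity) (ne_of_gt hγpos)).symm
        _ ≤ sbig^γ := Real.rpow_le_rpow hbase (le_max_right _ _) hγpos.le
    have hbig3 : c5 * (1/c5+1) ≤ c5 * sbig^γ := mul_le_mul_of_nonneg_left hbig2 hc5pos.le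
    have hbig4 : c5 * (1/c5+1) = 1 + c5 := by field_simp
    linarith [hkey sbig hs2, hbig3]

  -- conclusion from hex
  obtain ⟨s1, hs1, hψs1⟩ := hex
  have hψcI : ContinuousOn ψ (Icc 0 s1) := hψc.mono Icc_subset_Ici_self
  obtain ⟨z, hz, hψz⟩ := intermediate_value_Icc' hs1.le hψcI
    (show (0:ℝ) ∈ Icc (ψ s1) (ψ 0) by rw [hψ0]; exact ⟨hψs1, by norm_num⟩)
  set Z : Set ℝ := Icc 0 s1 ∩ ψ ⁻¹' {0} with hZdef
  have hZc : IsClosed Z := hψcI.preimage_isClosed_of_isClosed isClosed_Icc isClosed_singleton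
  have hZne : Z.Nonempty := ⟨z, hz, hψz⟩
  have hZbd : BddBelow Z := ⟨0, fun x hx => hx.1.1⟩
  set s₀ := sInf Z with hs₀def
  have hs₀Z : s₀ ∈ Z := hZc.csInf_mem hZne hZbd
  have hψs₀ : ψ s₀ = 0 := hs₀Z.2
  have hs₀pos : 0 < s₀ := by
    rcases lt_or_eq_of_le hs₀Z.1.1 with h | h
    · exact h
    · exfalso; rw [← h] at hψs₀; rw [hψ0] at hψs₀; norm_num at hψs₀
  have hmin : ∀ s, 0 < s → s < s₀ → 0 < ψ s := by
    intro s hs hss₀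
    by_contra hle
    push_neg at hle
    obtain ⟨z2, hz2, hψz2⟩ := intermediate_value_Icc' hs.le (hψc.mono Icc_subset_Ici_self)
      (show (0:ℝ) ∈ Icc (ψ s) (ψ 0) by rw [hψ0]; exact ⟨hle, by norm_num⟩)
    have hz2Z : z2 ∈ Z := by
      refine ⟨⟨hz2.1, ?_⟩, hψz2⟩
      have : s₀ ≤ s1 := hs₀Z.1.2
      linarith [hz2.2]
    have := csInf_le hZbd hz2Z
    rw [← hs₀def] at this
    linarith [hz2.2]
  have hwneg₀ : ∀ s, s ∈ Ioc (0:ℝ) s₀ → w s < 0 :=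
    hwneg s₀ hs₀pos (fun s hs => hmin s hs.1 hs.2)
  refine ⟨s₀, hs₀pos, hψs₀, ?_, fun s hs hss₀ => ⟨?_, hmin s hs hss₀⟩⟩
  · exact hψ'negOf s₀ hs₀pos (hwneg₀ s₀ ⟨hs₀pos, le_refl _⟩)
  · exact hψ'negOf s hs (hwneg₀ s ⟨hs, hss₀.le⟩)

/-- the solution `ψ` has a first positive zero `s₀` with `ψ'(s₀) < 0` and
`ψ' < 0 < ψ` on `(0, s₀)`. -/
theorem stmt19 (N : ℕ) (hN : 2 ≤ N) (p : ℝ)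
    (hp1 : 2 * (N : ℝ) / ((N : ℝ) + 1) < p) (hp2 : p < 2)
    (ψ ψ' Ψ' : ℝ → ℝ) (hψ : IsPsiSol N p ψ ψ' Ψ') :
    ∃ s₀ : ℝ, 0 < s₀ ∧ ψ s₀ = 0 ∧ ψ' s₀ < 0 ∧
      ∀ s, 0 < s → s < s₀ → ψ' s < 0 ∧ 0 < ψ s := by
  obtain ⟨hdψ, hcψ', hdΦ, hcΨ, hode, hψ0, hψ'0⟩ := hψ
  exact stmt19aux N hN p hp1 hp2 ψ ψ' Ψ' hdψ hdΦ hode hψ0 hψ'0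
end
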